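/- Let P be a partially ordered set with a commutative flow T, let F, G : P → Set be functors, fix η ∈ [0,∞), and let (φ, ψ) be a T_η-assignment between F and G. Write p ⋖ q for the covering relation (p < q and there is no r with p < r < q). Suppose every pair p < q in P admits a finite chain p = p_0 ⋖ p_1 ⋖ ⋯ ⋖ p_n = q of covering relations. Then sup_{p ≤ q} L_parL^{p,q}(φ) = sup_{p ⋖ q} L_parL^{p,q}(φ) and sup_{p ≤ q} L_parR^{p,q}(ψ) = sup_{p ⋖ q} L_parR^{p,q}(ψ); consequently the total loss satisfies L(φ,ψ) = max{ sup_{p ⋖ q} L_parL^{p,q}(φ), sup_{p ⋖ q} L_parR^{p,q}(ψ), sup_{p ∈ P} L_down^p(φ,ψ), sup_{p ∈ P} L_up^p(φ,ψ) }. -/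

import Mathlib

open scoped NNReal ENNReal

universe u v

/-- A commutative flow on a partially ordered set `P`. -/
structure CFlow (P : Type u) [PartialOrder P] where
  T : ℝ≥0 → P → P
  mono : ∀ ε : ℝ≥0, Monotone (T ε)
  T_zero : ∀ p : P, T 0 p = p
  T_add : ∀ (ε δ : ℝ≥0) (p : P), T (ε + δ) p = T ε (T δ p)
  le_T : ∀ (ε : ℝ≥0) (p : P), p ≤ T ε p
  T_le_T : ∀ {ε δ : ℝ≥0} (p : P), ε ≤ δ → T ε p ≤ T δ p

/-- A functor `P → Set` for a poset `P`. -/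
structure PosetFunctor (P : Type u) [PartialOrder P] where
  obj : P → Type v
  map : ∀ {p q : P}, p ≤ q → obj p → obj q
  map_id : ∀ (p : P) (a : obj p), map (le_refl p) a = a
  map_comp : ∀ {p q r : P} (h₁ : p ≤ q) (h₂ : q ≤ r) (a : obj p),
      map h₂ (map h₁ a) = map (h₁.trans h₂) a

/-- The merging distance `d_q^F(a,b)`, valued in `[0,∞]`. -/
noncomputable def mergeDist {P : Type u} [PartialOrder P] (T : CFlow P)
    (F : PosetFunctor P) (q : P) (a b : F.obj q) : ℝ≥0∞ :=
  sInf {x : ℝ≥0∞ | ∃ ε : ℝ≥0, x = (ε : ℝ≥0∞) ∧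
    F.map (T.le_T ε q) a = F.map (T.le_T ε q) b}

/-- The set `D_q^F` of reducing constants of `q` on `F`. -/
def reducingSet {P : Type u} [PartialOrder P] (T : CFlow P)
    (F : PosetFunctor P) (q : P) : Set ℝ≥0 :=
  {δ | ∀ (γ₁ γ₂ : ℝ≥0) (h₁ : γ₁ < δ) (h₂ : δ ≤ γ₂),
    ¬ Function.Injective (F.map (T.T_le_T q (h₁.le.trans h₂)))}

/-- The left parallelogram loss `L_parL^{p,q}(φ)`. -/
noncomputable def LparL {P : Type u} [PartialOrder P] (T : CFlow P)
    (F G : PosetFunctor P) (η : ℝ≥0)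
    (φ : ∀ p : P, F.obj p → G.obj (T.T η p)) {p q : P} (hpq : p ≤ q) : ℝ≥0∞ :=
  ⨆ a : F.obj p, mergeDist T G (T.T η q)
    (φ q (F.map hpq a)) (G.map (T.mono η hpq) (φ p a))

/-- The right parallelogram loss `L_parR^{p,q}(ψ)`. -/
noncomputable def LparR {P : Type u} [PartialOrder P] (T : CFlow P)
    (F G : PosetFunctor P) (η : ℝ≥0)
    (ψ : ∀ p : P, G.obj p → F.obj (T.T η p)) {p q : P} (hpq : p ≤ q) : ℝ≥0∞ :=
  ⨆ b : G.obj p, mergeDist T F (T.T η q)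
    (ψ q (G.map hpq b)) (F.map (T.mono η hpq) (ψ p b))

/-- The lower triangle loss `L_down^p(φ,ψ)`. -/
noncomputable def Ldown {P : Type u} [PartialOrder P] (T : CFlow P)
    (F G : PosetFunctor P) (η : ℝ≥0)
    (φ : ∀ p : P, F.obj p → G.obj (T.T η p))
    (ψ : ∀ p : P, G.obj p → F.obj (T.T η p)) (p : P) : ℝ≥0∞ :=
  ⨆ a : F.obj p, mergeDist T F (T.T η (T.T η p))
    (ψ (T.T η p) (φ p a))
    (F.map ((T.le_T η p).trans (T.le_T η (T.T η p))) a)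

/-- The upper triangle loss `L_up^p(φ,ψ)`. -/
noncomputable def Lup {P : Type u} [PartialOrder P] (T : CFlow P)
    (F G : PosetFunctor P) (η : ℝ≥0)
    (φ : ∀ p : P, F.obj p → G.obj (T.T η p))
    (ψ : ∀ p : P, G.obj p → F.obj (T.T η p)) (p : P) : ℝ≥0∞ :=
  ⨆ b : G.obj p, mergeDist T G (T.T η (T.T η p))
    (φ (T.T η p) (ψ p b))
    (G.map ((T.le_T η p).trans (T.le_T η (T.T η p))) b)

section Aux

variable {P : Type u} [PartialOrder P] (T : CFlow P)

lemma merge_mono (F : PosetFunctor P) (q : P) (a b : F.obj q) {ε δ : ℝ≥0}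
    (hεδ : ε ≤ δ) (h : F.map (T.le_T ε q) a = F.map (T.le_T ε q) b) :
    F.map (T.le_T δ q) a = F.map (T.le_T δ q) b := by
  calc F.map (T.le_T δ q) a
      = F.map (T.T_le_T q hεδ) (F.map (T.le_T ε q) a) :=
        (F.map_comp (T.le_T ε q) (T.T_le_T q hεδ) a).symm
    _ = F.map (T.T_le_T q hεδ) (F.map (T.le_T ε q) b) := by rw [h]
    _ = F.map (T.le_T δ q) b := F.map_comp (T.le_T ε q) (T.T_le_T q hεδ) b

lemma mergeDist_self (F : PosetFunctor P) (q : P) (a : F.obj q) :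
    mergeDist T F q a a = 0 :=
  le_antisymm (sInf_le ⟨0, by simp, rfl⟩) zero_le

lemma mergeDist_triangle (F : PosetFunctor P) (q : P) (a b c : F.obj q) :
    mergeDist T F q a c ≤ max (mergeDist T F q a b) (mergeDist T F q b c) := by
  by_contra hlt
  push_neg at hlt
  have h1 : mergeDist T F q a b < mergeDist T F q a c :=
    lt_of_le_of_lt (le_max_left _ _) hlt
  have h2 : mergeDist T F q b c < mergeDist T F q a c :=
    lt_of_le_of_lt (le_max_right _ _) hlt
  obtain ⟨x, ⟨ε, rfl, hε⟩, hx⟩ := sInf_lt_iff.mp h1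
  obtain ⟨y, ⟨δ, rfl, hδ⟩, hy⟩ := sInf_lt_iff.mp h2
  have hmem : ((max ε δ : ℝ≥0) : ℝ≥0∞) ∈ {x : ℝ≥0∞ | ∃ ε' : ℝ≥0,
      x = (ε' : ℝ≥0∞) ∧ F.map (T.le_T ε' q) a = F.map (T.le_T ε' q) c} := by
    refine ⟨max ε δ, rfl, ?_⟩
    exact (merge_mono T F q a b (le_max_left ε δ) hε).trans
      (merge_mono T F q b c (le_max_right ε δ) hδ)
  have hle := sInf_le hmem
  have : ((max ε δ : ℝ≥0) : ℝ≥0∞) < mergeDist T F q a c := by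
    rw [ENNReal.coe_max]
    exact max_lt hx hy
  exact absurd hle (not_le_of_gt this)

lemma mergeDist_map (F : PosetFunctor P) {q q' : P} (h : q ≤ q') (a b : F.obj q) :
    mergeDist T F q' (F.map h a) (F.map h b) ≤ mergeDist T F q a b := by
  apply sInf_le_sInf
  rintro x ⟨ε, rfl, hε⟩
  refine ⟨ε, rfl, ?_⟩
  have key : ∀ c : F.obj q, F.map (T.le_T ε q') (F.map h c)
      = F.map (T.mono ε h) (F.map (T.le_T ε q) c) := fun c => by
    rw [F.map_comp, F.map_comp]
  rw [key, key, hε]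

lemma LparL_comp (F G : PosetFunctor P) (η : ℝ≥0)
    (φ : ∀ p : P, F.obj p → G.obj (T.T η p)) {p q r : P} (h1 : p ≤ q) (h2 : q ≤ r) :
    LparL T F G η φ (h1.trans h2) ≤ max (LparL T F G η φ h1) (LparL T F G η φ h2) := by
  refine iSup_le fun a => ?_
  have tri := mergeDist_triangle T G (T.T η r)
    (φ r (F.map (h1.trans h2) a))
    (G.map (T.mono η h2) (φ q (F.map h1 a)))
    (G.map (T.mono η (h1.trans h2)) (φ p a))
  refine tri.trans (max_le ?_ ?_)
  · have e : F.map (h1.trans h2) a = F.map h2 (F.map h1 a) :=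
      (F.map_comp h1 h2 a).symm
    rw [e]
    exact le_max_of_le_right
      (le_iSup (fun b : F.obj q => mergeDist T G (T.T η r)
        (φ r (F.map h2 b)) (G.map (T.mono η h2) (φ q b))) (F.map h1 a))
  · have ez : G.map (T.mono η (h1.trans h2)) (φ p a)
        = G.map (T.mono η h2) (G.map (T.mono η h1) (φ p a)) :=
      (G.map_comp (T.mono η h1) (T.mono η h2) (φ p a)).symm
    rw [ez]
    refine le_max_of_le_left ?_
    refine (mergeDist_map T G (T.mono η h2) _ _).trans ?_
    exact le_iSup (fun b : F.obj p => mergeDist T G (T.T η q)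
      (φ q (F.map h1 b)) (G.map (T.mono η h1) (φ p b))) a

lemma covChain_le {p q : P} (h : Relation.TransGen (· ⋖ ·) p q) : p ≤ q := by
  induction h with
  | single h => exact h.le
  | tail _ h ih => exact ih.trans h.le

lemma LparL_le_sup_cov (F G : PosetFunctor P) (η : ℝ≥0)
    (φ : ∀ p : P, F.obj p → G.obj (T.T η p))
    (hcov : ∀ p q : P, p < q → Relation.TransGen (· ⋖ ·) p q)
    {p q : P} (h : p ≤ q) :
    LparL T F G η φ h ≤ ⨆ (p : P) (q : P) (h : p ⋖ q), LparL T F G η φ h.le := by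
  rcases h.lt_or_eq with hlt | rfl
  · have htg := hcov p q hlt
    have : ∀ {a : P} (h' : Relation.TransGen (· ⋖ ·) a q),
        LparL T F G η φ (covChain_le h') ≤
          ⨆ (p : P) (q : P) (h : p ⋖ q), LparL T F G η φ h.le := by
      intro a h'
      induction h' using Relation.TransGen.head_induction_on with
      | single hc =>
        exact le_iSup_of_le _ (le_iSup_of_le q (le_iSup_of_le hc le_rfl))
      | head hc htg' IH =>
        refine (LparL_comp T F G η φ hc.le (covChain_le htg')).trans (max_le ?_ IH)
        exact le_iSup_of_le _ (le_iSup_of_le _ (le_iSup_of_le hc le_rfl))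
    exact this htg
  · refine iSup_le fun a => ?_
    have e1 : F.map h a = a := F.map_id p a
    have e2 : G.map (T.mono η h) (φ p a) = φ p a := G.map_id _ _
    rw [e1, e2, mergeDist_self]
    exact zero_le

lemma sup_LparL_eq (F G : PosetFunctor P) (η : ℝ≥0)
    (φ : ∀ p : P, F.obj p → G.obj (T.T η p))
    (hcov : ∀ p q : P, p < q → Relation.TransGen (· ⋖ ·) p q) :
    (⨆ (p : P) (q : P) (h : p ≤ q), LparL T F G η φ h) =
      (⨆ (p : P) (q : P) (h : p ⋖ q), LparL T F G η φ h.le) := by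
  refine le_antisymm ?_ ?_
  · exact iSup_le fun p => iSup_le fun q => iSup_le fun h =>
      LparL_le_sup_cov T F G η φ hcov h
  · exact iSup_le fun p => iSup_le fun q => iSup_le fun h =>
      le_iSup_of_le p (le_iSup_of_le q (le_iSup_of_le h.le le_rfl))

end Aux

/-- If every pair `p < q` in `P` is connected by a finite chain of covering relations, the
suprema of the parallelogram losses over all pairs `p ≤ q` equal the suprema over covering
pairs `p ⋖ q`; consequently the total loss is computed from covering pairs only. -/
theorem loss_eq_sup_covBy {P : Type u} [PartialOrder P]
    (T : CFlow P) (F G : PosetFunctor P) (η : ℝ≥0)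
    (φ : ∀ p : P, F.obj p → G.obj (T.T η p))
    (ψ : ∀ p : P, G.obj p → F.obj (T.T η p))
    (hcov : ∀ p q : P, p < q → Relation.TransGen (· ⋖ ·) p q) :
    (⨆ (p : P) (q : P) (h : p ≤ q), LparL T F G η φ h) =
      (⨆ (p : P) (q : P) (h : p ⋖ q), LparL T F G η φ h.le) ∧
    (⨆ (p : P) (q : P) (h : p ≤ q), LparR T F G η ψ h) =
      (⨆ (p : P) (q : P) (h : p ⋖ q), LparR T F G η ψ h.le) ∧
    max (max (⨆ (p : P) (q : P) (h : p ≤ q), LparL T F G η φ h)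
             (⨆ (p : P) (q : P) (h : p ≤ q), LparR T F G η ψ h))
        (max (⨆ p : P, Ldown T F G η φ ψ p) (⨆ p : P, Lup T F G η φ ψ p)) =
    max (max (⨆ (p : P) (q : P) (h : p ⋖ q), LparL T F G η φ h.le)
             (⨆ (p : P) (q : P) (h : p ⋖ q), LparR T F G η ψ h.le))
        (max (⨆ p : P, Ldown T F G η φ ψ p) (⨆ p : P, Lup T F G η φ ψ p)) := by
  have L1 := sup_LparL_eq T F G η φ hcov
  have L2 : (⨆ (p : P) (q : P) (h : p ≤ q), LparR T F G η ψ h) =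
      (⨆ (p : P) (q : P) (h : p ⋖ q), LparR T F G η ψ h.le) :=
    sup_LparL_eq T G F η ψ hcov
  exact ⟨L1, L2, by rw [L1, L2]⟩
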